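/- Let W be a general safety objective over C and M a chromatic memory structure. Then M suffices to play optimally for W in all finitely branching arenas if and only if W is M-strongly-monotone. -/

import Mathlib

set_option autoImplicit false

namespace RegularMemory

/-- Concatenation of a finite word with an infinite word. -/
def wcat {C : Type} (w : List C) (x : ℕ → C) : ℕ → C := fun n =>
  if h : n < w.length then w.get ⟨n, h⟩ else x (n - w.length)

/-- The infinite word `w^ω` (junk value if `w` is empty). -/
noncomputable def wpow {C : Type} [Nonempty C] : List C → ℕ → C
  | [] => fun _ => Classical.arbitrary C
  | (a :: l) => fun n => (a :: l).get ⟨n % (a :: l).length, Nat.mod_lt n (Nat.succ_pos _)⟩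

/-- Winning continuations `w⁻¹W` of the finite word `w` for the objective `W`. -/
def contAfter {C : Type} (W : Set (ℕ → C)) (w : List C) : Set (ℕ → C) :=
  {x | wcat w x ∈ W}

/-- Prefix preorder `w₁ ⪯_W w₂`. -/
def prefLe {C : Type} (W : Set (ℕ → C)) (w₁ w₂ : List C) : Prop :=
  contAfter W w₁ ⊆ contAfter W w₂

/-- Strict prefix relation `w₁ ≺_W w₂`. -/
def prefLt {C : Type} (W : Set (ℕ → C)) (w₁ w₂ : List C) : Prop :=
  prefLe W w₁ w₂ ∧ ¬ prefLe W w₂ w₁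

/-- Comparability for the prefix preorder. -/
def PrefComparable {C : Type} (W : Set (ℕ → C)) (w₁ w₂ : List C) : Prop :=
  prefLe W w₁ w₂ ∨ prefLe W w₂ w₁

/-- The general reachability objective derived from `A`: infinite words with a prefix in `A`. -/
def ReachObj {C : Type} (A : Set (List C)) : Set (ℕ → C) :=
  {x | ∃ n : ℕ, (List.ofFn fun i : Fin n => x i) ∈ A}

/-- The general safety objective derived from `A`. -/
def SafeObj {C : Type} (A : Set (List C)) : Set (ℕ → C) :=
  (ReachObj A)ᶜ

/-- The prefix preorder of `W` has finitely many equivalence classes. -/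
def FinClasses {C : Type} (W : Set (ℕ → C)) : Prop :=
  (Set.range fun w : List C => contAfter W w).Finite

/-- The prefix preorder of `W` is well-founded:
every nonempty chain contains a minimal element. -/
def PrefWellFounded {C : Type} (W : Set (ℕ → C)) : Prop :=
  ∀ S : Set (List C), S.Nonempty →
    (∀ w₁ ∈ S, ∀ w₂ ∈ S, PrefComparable W w₁ w₂) →
    ∃ w₀ ∈ S, ∀ w ∈ S, ¬ prefLt W w w₀

/-- Chromatic memory structure. -/
structure MemStruct (C : Type) where
  M : Type
  init : M
  upd : M → C → M

/-- Extension of the update function to finite words. -/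
def MemStruct.updStar {C : Type} (N : MemStruct C) (m : N.M) (w : List C) : N.M :=
  w.foldl N.upd m

/-- The trivial one-state memory structure. -/
def trivMem (C : Type) : MemStruct C :=
  ⟨Unit, (), fun _ _ => ()⟩

/-- `W` is `N`-strongly-monotone. -/
def StronglyMonotone {C : Type} (N : MemStruct C) (W : Set (ℕ → C)) : Prop :=
  ∀ w₁ w₂ : List C,
    N.updStar N.init w₁ = N.updStar N.init w₂ → PrefComparable W w₁ w₂

/-- `W` is `N`-progress-consistent. -/
def ProgressConsistent {C : Type} [Nonempty C] (N : MemStruct C) (W : Set (ℕ → C)) : Prop :=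
  ∀ (m : N.M) (w₁ w₂ : List C),
    N.updStar N.init w₁ = m → N.updStar m w₂ = m →
    prefLt W w₁ (w₁ ++ w₂) → wcat w₁ (wpow w₂) ∈ W

/-- Two-player arena with colored edges; Player-1 vertices have outgoing edges
(so that strategies of Player 1 exist). -/
structure Arena (C : Type) where
  V : Type
  P1 : V → Prop
  E : Set (V × C × V)
  succ : ∀ v : V, P1 v → ∃ e ∈ E, e.1 = v

namespace Arena

/-- Valid histories starting at a given vertex. -/
def HistFrom {C : Type} (A : Arena C) : A.V → List (A.V × C × A.V) → Prop
  | _, [] => True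
  | v, e :: l => e ∈ A.E ∧ e.1 = v ∧ HistFrom A e.2.2 l

/-- Endpoint of a history. -/
def endFrom {C : Type} (A : Arena C) : A.V → List (A.V × C × A.V) → A.V
  | v, [] => v
  | _, e :: l => endFrom A e.2.2 l

/-- Infinite plays from a vertex. -/
def PlayFrom {C : Type} (A : Arena C) (v : A.V) (π : ℕ → A.V × C × A.V) : Prop :=
  (π 0).1 = v ∧ ∀ n : ℕ, π n ∈ A.E ∧ (π n).2.2 = (π (n + 1)).1

/-- Colors along a play. -/
def playCol {C V : Type} (π : ℕ → V × C × V) : ℕ → C :=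
  fun n => (π n).2.1

/-- Strategies of Player 1: on every valid history ending in a Player-1 vertex,
the strategy picks an edge leaving that vertex. -/
structure Strategy {C : Type} (A : Arena C) where
  next : A.V → List (A.V × C × A.V) → A.V × C × A.V
  legal : ∀ (v : A.V) (l : List (A.V × C × A.V)),
    A.HistFrom v l → A.P1 (A.endFrom v l) →
      next v l ∈ A.E ∧ (next v l).1 = A.endFrom v l

/-- A play from `v` is consistent with the strategy `σ`. -/
def Strategy.Consistent {C : Type} {A : Arena C} (σ : A.Strategy) (v : A.V)
    (π : ℕ → A.V × C × A.V) : Prop :=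
  ∀ n : ℕ, A.P1 (A.endFrom v (List.ofFn fun i : Fin n => π i)) →
    π n = σ.next v (List.ofFn fun i : Fin n => π i)

/-- `σ` is winning from `v` for the objective `W`. -/
def Strategy.WinningFrom {C : Type} {A : Arena C} (σ : A.Strategy)
    (W : Set (ℕ → C)) (v : A.V) : Prop :=
  ∀ π : ℕ → A.V × C × A.V, A.PlayFrom v π → σ.Consistent v π → playCol π ∈ W

/-- `σ` is optimal in `(A, W)`: winning from every vertex from which
Player 1 has some winning strategy. -/
def Strategy.Optimal {C : Type} {A : Arena C} (σ : A.Strategy) (W : Set (ℕ → C)) : Prop :=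
  ∀ v : A.V, (∃ σ' : A.Strategy, σ'.WinningFrom W v) → σ.WinningFrom W v

/-- `σ` is based on the memory structure `N`. -/
def Strategy.BasedOn {C : Type} {A : Arena C} (σ : A.Strategy) (N : MemStruct C) : Prop :=
  ∃ nxt : A.V → N.M → A.V × C × A.V,
    ∀ (v : A.V) (l : List (A.V × C × A.V)),
      A.HistFrom v l → A.P1 (A.endFrom v l) →
        σ.next v l = nxt (A.endFrom v l) (N.updStar N.init (l.map fun e => e.2.1))

/-- Finite arena: finitely many vertices and edges. -/
def IsFinite {C : Type} (A : Arena C) : Prop := Finite A.V ∧ A.E.Finite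

/-- Finitely branching arena. -/
def FinBranching {C : Type} (A : Arena C) : Prop :=
  ∀ v : A.V, {e ∈ A.E | e.1 = v}.Finite

/-- One-player arena of Player 1. -/
def OneP1 {C : Type} (A : Arena C) : Prop := ∀ v : A.V, A.P1 v

end Arena

/-- `N` suffices to play optimally for `W` in all arenas of the class `P`. -/
def SufficesIn {C : Type} (N : MemStruct C) (W : Set (ℕ → C))
    (P : Arena C → Prop) : Prop :=
  ∀ A : Arena C, P A → ∃ σ : A.Strategy, σ.BasedOn N ∧ σ.Optimal W

/-- Deterministic automaton (with complete transition function). -/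
structure DetAuto (C : Type) where
  Q : Type
  init : Q
  δ : Q → C → Q
  F : Set Q

/-- Extension of the transition function to finite words. -/
def DetAuto.δStar {C : Type} (D : DetAuto C) (q : D.Q) (w : List C) : D.Q :=
  w.foldl D.δ q

/-- Language recognized by `D`. -/
def DetAuto.lang {C : Type} (D : DetAuto C) : Set (List C) :=
  {w | D.δStar D.init w ∈ D.F}

/-- Prefix preorder extended to automaton states. -/
def statePrefLe {C : Type} (D : DetAuto C) (W : Set (ℕ → C)) (q₁ q₂ : D.Q) : Prop :=
  ∀ w₁ w₂ : List C,
    D.δStar D.init w₁ = q₁ → D.δStar D.init w₂ = q₂ → prefLe W w₁ w₂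

def statePrefLt {C : Type} (D : DetAuto C) (W : Set (ℕ → C)) (q₁ q₂ : D.Q) : Prop :=
  statePrefLe D W q₁ q₂ ∧ ¬ statePrefLe D W q₂ q₁

def StateComparable {C : Type} (D : DetAuto C) (W : Set (ℕ → C)) (q₁ q₂ : D.Q) : Prop :=
  statePrefLe D W q₁ q₂ ∨ statePrefLe D W q₂ q₁

/-- Monotone decomposition of `D` with `k` sets. -/
def MonotoneDecomposition {C : Type} (D : DetAuto C) (W : Set (ℕ → C))
    {k : ℕ} (Γ : Fin k → Set D.Q) : Prop :=
  (∀ q : D.Q, ∃ i : Fin k, q ∈ Γ i) ∧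
  (∀ (c : C) (i : Fin k), ∃ j : Fin k, (fun q => D.δ q c) '' Γ i ⊆ Γ j) ∧
  (∀ i : Fin k, ∀ q₁ ∈ Γ i, ∀ q₂ ∈ Γ i, StateComparable D W q₁ q₂)

end RegularMemory


namespace RegularMemory

/-- basic wcat lemmas -/
theorem wcat_nil {C : Type} (x : ℕ → C) : wcat ([] : List C) x = x := by
  funext n; simp [wcat]

theorem wcat_lt {C : Type} (w : List C) (x : ℕ → C) {n : ℕ} (h : n < w.length) :
    wcat w x n = w.get ⟨n, h⟩ := by simp [wcat, h]

theorem wcat_ge {C : Type} (w : List C) (x : ℕ → C) {n : ℕ} (h : ¬ n < w.length) :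
    wcat w x n = x (n - w.length) := by simp [wcat, h]

theorem wcat_append {C : Type} (u v : List C) (x : ℕ → C) :
    wcat (u ++ v) x = wcat u (wcat v x) := by
  funext n
  by_cases h : n < u.length
  · rw [wcat_lt (u ++ v) x (show n < (u ++ v).length by simp; omega), wcat_lt u (wcat v x) h]
    simp [List.get_eq_getElem, List.getElem_append_left h]
  · rw [wcat_ge u (wcat v x) h]
    by_cases h2 : n < (u ++ v).length
    · rw [wcat_lt (u ++ v) x h2, wcat_lt v x (by simp at h2; omega)]
      simp [List.get_eq_getElem, List.getElem_append_right (le_of_not_gt h)]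
    · rw [wcat_ge (u ++ v) x h2, wcat_ge v x (by simp at h2; omega)]
      congr 1; simp; omega

theorem ofFn_wcat {C : Type} {w : List C} {n : ℕ} (h : w.length = n) (x : ℕ → C) :
    (List.ofFn fun i : Fin n => wcat w x i) = w := by
  subst h
  have : (fun i : Fin w.length => wcat w x i) = w.get := by
    funext i; exact wcat_lt w x i.2
  rw [this, List.ofFn_get]

theorem prefLe_append {C : Type} (W : Set (ℕ → C)) {w₁ w₂ : List C} (c : C)
    (h : prefLe W w₁ w₂) : prefLe W (w₁ ++ [c]) (w₂ ++ [c]) := by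
  intro x hx
  have h1 : wcat w₁ (wcat [c] x) ∈ W := by
    rw [← wcat_append]; exact hx
  have h2 : wcat [c] x ∈ contAfter W w₂ := h h1
  show wcat (w₂ ++ [c]) x ∈ W
  rw [wcat_append]; exact h2

/-- Winning with prefix `w`. -/
def WinA {C : Type} (A : Arena C) (W : Set (ℕ → C)) (v : A.V) (w : List C) : Prop :=
  ∃ σ : A.Strategy, ∀ π, A.PlayFrom v π → σ.Consistent v π → wcat w (Arena.playCol π) ∈ W

theorem winA_mono {C : Type} {A : Arena C} {W : Set (ℕ → C)} {v : A.V} {w w' : List C}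
    (hle : prefLe W w w') (h : WinA A W v w) : WinA A W v w' := by
  obtain ⟨σ, hσ⟩ := h
  exact ⟨σ, fun π h1 h2 => hle (hσ π h1 h2)⟩

section hist
variable {C : Type} {A : Arena C}

theorem endFrom_append (v : A.V) (l : List (A.V × C × A.V)) (e : A.V × C × A.V) :
    A.endFrom v (l ++ [e]) = e.2.2 := by
  induction l generalizing v with
  | nil => rfl
  | cons f l ih => exact ih f.2.2

theorem histFrom_append {v : A.V} {l : List (A.V × C × A.V)} {e : A.V × C × A.V}
    (hl : A.HistFrom v l) (he : e ∈ A.E) (hsrc : e.1 = A.endFrom v l) :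
    A.HistFrom v (l ++ [e]) := by
  induction l generalizing v with
  | nil => exact ⟨he, hsrc, trivial⟩
  | cons f l ih =>
    obtain ⟨h1, h2, h3⟩ := hl
    exact ⟨h1, h2, ih h3 hsrc⟩

theorem ofFn_play_succ (π : ℕ → A.V × C × A.V) (n : ℕ) :
    (List.ofFn fun i : Fin (n+1) => π i) = (List.ofFn fun i : Fin n => π i) ++ [π n] := by
  rw [List.ofFn_succ']
  simp [List.concat_eq_append, Fin.last]

theorem play_prefix_hist {v : A.V} {π : ℕ → A.V × C × A.V} (hπ : A.PlayFrom v π) :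
    ∀ n : ℕ, A.HistFrom v (List.ofFn fun i : Fin n => π i) ∧
      A.endFrom v (List.ofFn fun i : Fin n => π i) = (π n).1 := by
  intro n
  induction n with
  | zero => exact ⟨trivial, hπ.1.symm⟩
  | succ n ih =>
    rw [ofFn_play_succ]
    refine ⟨histFrom_append ih.1 (hπ.2 n).1 ?_, ?_⟩
    · rw [ih.2]
    · rw [endFrom_append, (hπ.2 n).2]

open Classical in
/-- default strategy -/
noncomputable def defStrat [Nonempty C] (A : Arena C) : A.Strategy where
  next v l := if h : A.P1 (A.endFrom v l) then (A.succ _ h).choose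
    else (v, Classical.arbitrary C, v)
  legal v l _ h := by
    simp only [dif_pos h]
    obtain ⟨h1, h2⟩ := (A.succ _ h).choose_spec
    exact ⟨h1, h2⟩

/-- prepend an edge to a play -/
def consPlay {C : Type} {A : Arena C} (e : A.V × C × A.V) (π : ℕ → A.V × C × A.V) :
    ℕ → A.V × C × A.V := fun n => Nat.casesOn n e (fun k => π k)

open Classical in
/-- shifting a winning strategy along an edge -/
theorem winA_shift [Nonempty C] {W : Set (ℕ → C)} {v : A.V} {w : List C}
    (σ : A.Strategy)
    (hσ : ∀ π, A.PlayFrom v π → σ.Consistent v π → wcat w (Arena.playCol π) ∈ W)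
    (e : A.V × C × A.V) (he : e ∈ A.E) (hsrc : e.1 = v)
    (hP1 : A.P1 v → σ.next v [] = e) :
    WinA A W e.2.2 (w ++ [e.2.1]) := by
  refine ⟨⟨fun u l => if h : u = e.2.2 then σ.next v (e :: l) else (defStrat A).next u l,
    ?_⟩, ?_⟩
  · intro u l hl hp
    by_cases h : u = e.2.2
    · subst h
      simp only [dif_pos rfl]
      exact σ.legal v (e :: l) ⟨he, hsrc, hl⟩ hp
    · simp only [dif_neg h]
      exact (defStrat A).legal u l hl hp
  · intro π hπ hcons
    have hπ' : consPlay e π = consPlay e π := rfl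
    let π' := consPlay e π
    have hofn : ∀ n : ℕ, (List.ofFn fun i : Fin (n+1) => π' i) =
        e :: (List.ofFn fun i : Fin n => π i) := by
      intro n
      rw [List.ofFn_succ]
      rfl
    have hplay : A.PlayFrom v π' := by
      refine ⟨hsrc, fun n => ?_⟩
      cases n with
      | zero => exact ⟨he, hπ.1.symm⟩
      | succ k => exact (hπ.2 k)
    have hcons' : σ.Consistent v π' := by
      intro n hp
      cases n with
      | zero =>
        simp only [List.ofFn_zero] at hp ⊢
        exact (hP1 hp).symm
      | succ k =>
        rw [hofn k] at hp ⊢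
        have hp2 : A.P1 (A.endFrom e.2.2 (List.ofFn fun i : Fin k => π i)) := hp
        have := hcons k hp2
        show π k = _
        rw [this]
        simp only [dif_pos rfl]
        rfl
    have hW := hσ π' hplay hcons'
    have hcol : wcat (w ++ [e.2.1]) (Arena.playCol π) = wcat w (Arena.playCol π') := by
      have h2 : wcat [e.2.1] (Arena.playCol π) = Arena.playCol π' := by
        funext n
        cases n with
        | zero =>
          show wcat [e.2.1] (Arena.playCol π) 0 = e.2.1
          simp [wcat]
        | succ k =>
          show wcat [e.2.1] (Arena.playCol π) (k+1) = (π k).2.1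
          simp [wcat, Arena.playCol]
      rw [wcat_append, h2]
    rw [hcol]
    exact hW

end hist

section dead
variable {C : Type} {A : Arena C}

/-- Stages of the "dead" (Player 1 can avoid all infinite plays) region. -/
def DeadN (A : Arena C) : ℕ → A.V → Prop
  | 0, _ => False
  | (n+1), v => (¬ A.P1 v ∧ ∀ e ∈ A.E, e.1 = v → DeadN A n e.2.2) ∨
      (A.P1 v ∧ ∃ e ∈ A.E, e.1 = v ∧ DeadN A n e.2.2)

def DeadV (A : Arena C) (v : A.V) : Prop := ∃ n, DeadN A n v

theorem deadN_mono : ∀ {n m : ℕ} {v : A.V}, DeadN A n v → n ≤ m → DeadN A m v := by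
  intro n
  induction n with
  | zero => intro m v h _; exact absurd h (by simp [DeadN])
  | succ n ih =>
    intro m v h hle
    obtain ⟨m, rfl⟩ : ∃ m', m = m' + 1 := ⟨m - 1, by omega⟩
    rcases h with ⟨h1, h2⟩ | ⟨h1, e, he, hs, hd⟩
    · exact Or.inl ⟨h1, fun e he hs => ih (h2 e he hs) (by omega)⟩
    · exact Or.inr ⟨h1, e, he, hs, ih hd (by omega)⟩

theorem notdead_p1 {v : A.V} (hv : ¬ DeadV A v) (h1 : A.P1 v) :
    ∀ e ∈ A.E, e.1 = v → ¬ DeadV A e.2.2 := by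
  rintro e he hs ⟨n, hd⟩
  exact hv ⟨n + 1, Or.inr ⟨h1, e, he, hs, hd⟩⟩

open Classical in
theorem notdead_p2 (hfb : A.FinBranching) {v : A.V} (hv : ¬ DeadV A v) (h1 : ¬ A.P1 v) :
    ∃ e, e ∈ A.E ∧ e.1 = v ∧ ¬ DeadV A e.2.2 := by
  by_contra hcon
  push_neg at hcon
  have hall : ∀ e ∈ A.E, e.1 = v → DeadV A e.2.2 := hcon
  set S : Set (A.V × C × A.V) := {e ∈ A.E | e.1 = v} with hS
  haveI : Finite S := (hfb v).to_subtype
  set g : S → ℕ := fun e => Nat.find (hall e.1 e.2.1 e.2.2) with hg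
  obtain ⟨B, hB⟩ := (Set.finite_range g).bddAbove
  refine hv ⟨B + 1, Or.inl ⟨h1, fun e he hs => ?_⟩⟩
  have h2 : g ⟨e, he, hs⟩ ≤ B := hB (Set.mem_range_self _)
  exact deadN_mono (Nat.find_spec (hall e he hs)) h2

open Classical in
theorem exists_deadEdge {v : A.V} (h1 : A.P1 v) (hD : DeadV A v) :
    ∃ e, e ∈ A.E ∧ e.1 = v ∧ ∃ hD' : DeadV A e.2.2, Nat.find hD' < Nat.find hD := by
  have hspec := Nat.find_spec hD
  cases hfind : Nat.find hD with
  | zero => rw [hfind] at hspec; exact absurd hspec (by simp [DeadN])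
  | succ s =>
    rw [hfind] at hspec
    rcases hspec with ⟨hnp, _⟩ | ⟨_, e, he, hs, hd⟩
    · exact absurd h1 hnp
    · refine ⟨e, he, hs, ⟨s, hd⟩, ?_⟩
      have := Nat.find_min' (⟨s, hd⟩ : DeadV A e.2.2) hd
      omega

open Classical in
theorem dead_no_play [Nonempty C] {N : MemStruct C}
    (nxt : A.V → N.M → A.V × C × A.V)
    (hnxt : ∀ (v : A.V) (m : N.M) (h1 : A.P1 v) (hD : DeadV A v),
      ∃ hD' : DeadV A (nxt v m).2.2, Nat.find hD' < Nat.find hD) :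
    ∀ (r : ℕ) (v : A.V) (hD : DeadV A v), Nat.find hD ≤ r →
      ∀ (m₀ : N.M) (π : ℕ → A.V × C × A.V), A.PlayFrom v π →
      (∀ k, A.P1 ((π k).1) →
        π k = nxt ((π k).1) (N.updStar m₀ (List.ofFn fun i : Fin k => Arena.playCol π i))) →
      False := by
  intro r
  induction r with
  | zero =>
    intro v hD hle _ _ _ _
    have := Nat.find_spec hD
    rw [Nat.le_zero.1 hle] at this
    exact absurd this (by simp [DeadN])
  | succ r ih =>
    intro v hD hle m₀ π hπ hcons
    -- common tail data
    set τ : ℕ → A.V × C × A.V := fun k => π (k + 1) with hτ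
    have hplayτ : A.PlayFrom ((π 0).2.2) τ :=
      ⟨((hπ.2 0).2).symm, fun k => hπ.2 (k + 1)⟩
    have hconsτ : ∀ k, A.P1 ((τ k).1) →
        τ k = nxt ((τ k).1)
          (N.updStar (N.upd m₀ (Arena.playCol π 0)) (List.ofFn fun i : Fin k => Arena.playCol τ i)) := by
      intro k hp
      have hlist : (List.ofFn fun i : Fin (k+1) => Arena.playCol π i)
          = Arena.playCol π 0 :: (List.ofFn fun i : Fin k => Arena.playCol τ i) := by
        rw [List.ofFn_succ]; rfl
      have := hcons (k + 1) hp
      rw [hlist] at this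
      exact this
    by_cases h1 : A.P1 v
    · have h0 : (π 0).1 = v := hπ.1
      have hc0 := hcons 0 (by rw [h0]; exact h1)
      rw [h0] at hc0
      simp only [List.ofFn_zero, MemStruct.updStar, List.foldl_nil] at hc0
      obtain ⟨hD', hlt⟩ := hnxt v m₀ h1 hD
      have htgt : (π 0).2.2 = (nxt v m₀).2.2 := by rw [hc0]
      rw [htgt] at hplayτ
      exact ih (nxt v m₀).2.2 hD' (by omega) _ τ hplayτ hconsτ
    · have hspec := Nat.find_spec hD
      cases hfind : Nat.find hD with
      | zero => rw [hfind] at hspec; exact absurd hspec (by simp [DeadN])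
      | succ s =>
        rw [hfind] at hspec
        rcases hspec with ⟨_, hall⟩ | ⟨hp1, _⟩
        · have hd0 : DeadN A s ((π 0).2.2) := hall (π 0) (hπ.2 0).1 hπ.1
          have hD' : DeadV A ((π 0).2.2) := ⟨s, hd0⟩
          have hle' : Nat.find hD' ≤ r := by
            have := Nat.find_min' hD' hd0
            omega
          exact ih ((π 0).2.2) hD' hle' _ τ hplayτ hconsτ
        · exact absurd hp1 h1

end dead

section goodedge
variable {C : Type} [Nonempty C] {A : Arena C}

theorem exists_goodEdge (hfb : A.FinBranching) (W : Set (ℕ → C)) (N : MemStruct C)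
    (SM : StronglyMonotone N W) {v : A.V} (h1 : A.P1 v) (m : N.M) :
    ∃ e, e ∈ A.E ∧ e.1 = v ∧ ∀ w : List C, N.updStar N.init w = m →
      WinA A W v w → WinA A W e.2.2 (w ++ [e.2.1]) := by
  classical
  set Ev : Set (A.V × C × A.V) := {e ∈ A.E | e.1 = v} with hEv
  have hEvfin : Ev.Finite := hfb v
  obtain ⟨e₀, he₀, hs₀⟩ := A.succ v h1
  set U : A.V × C × A.V → Set (List C) := fun e =>
    {w | N.updStar N.init w = m ∧ WinA A W v w ∧ WinA A W e.2.2 (w ++ [e.2.1])} with hU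
  have claim1 : ∀ w : List C, N.updStar N.init w = m → WinA A W v w →
      ∃ e ∈ Ev, w ∈ U e := by
    intro w hm hw
    obtain ⟨σ, hσ⟩ := hw
    have hleg := σ.legal v [] trivial h1
    refine ⟨σ.next v [], ⟨hleg.1, hleg.2⟩, hm, ⟨σ, hσ⟩, ?_⟩
    exact winA_shift σ hσ (σ.next v []) hleg.1 hleg.2 (fun _ => rfl)
  have claim2 : ∀ e₁ ∈ Ev, ∀ e₂ ∈ Ev, U e₁ ⊆ U e₂ ∨ U e₂ ⊆ U e₁ := by
    intro e₁ _ e₂ _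
    by_contra hcon
    push_neg at hcon
    obtain ⟨w₁, hw₁, hw₁'⟩ := Set.not_subset.1 hcon.1
    obtain ⟨w₂, hw₂, hw₂'⟩ := Set.not_subset.1 hcon.2
    rcases SM w₁ w₂ (by rw [hw₁.1, hw₂.1]) with hle | hle
    · exact hw₂' ⟨hw₂.1, hw₂.2.1, winA_mono (prefLe_append W e₁.2.1 hle) hw₁.2.2⟩
    · exact hw₁' ⟨hw₁.1, hw₁.2.1, winA_mono (prefLe_append W e₂.2.1 hle) hw₂.2.2⟩
  obtain ⟨es, hes, hmax⟩ := Set.Finite.exists_maximalFor U Ev hEvfin ⟨e₀, he₀, hs₀⟩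
  refine ⟨es, hes.1, hes.2, ?_⟩
  intro w hm hw
  obtain ⟨e, heEv, hwU⟩ := claim1 w hm hw
  rcases claim2 e heEv es hes with hle | hle
  · exact (hle hwU).2.2
  · have heq := hmax heEv hle
    exact (heq hwU).2.2

open Classical in
theorem alive (hfb : A.FinBranching) {W : Set (ℕ → C)} {v : A.V} {w : List C}
    (hv : ¬ DeadV A v) (hw : WinA A W v w) : ∃ x : ℕ → C, wcat w x ∈ W := by
  obtain ⟨σ, hσ⟩ := hw
  set pick : List (A.V × C × A.V) → A.V × C × A.V := fun l =>
    if _ : A.P1 (A.endFrom v l) then σ.next v l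
    else if h2 : ∃ e, e ∈ A.E ∧ e.1 = A.endFrom v l ∧ ¬ DeadV A e.2.2 then h2.choose
    else (v, Classical.arbitrary C, v) with hpick
  have step : ∀ l : List (A.V × C × A.V), A.HistFrom v l → ¬ DeadV A (A.endFrom v l) →
      pick l ∈ A.E ∧ (pick l).1 = A.endFrom v l ∧ ¬ DeadV A (pick l).2.2 ∧
        (A.P1 (A.endFrom v l) → pick l = σ.next v l) := by
    intro l hl hnd
    by_cases h1 : A.P1 (A.endFrom v l)
    · have hleg := σ.legal v l hl h1
      have : pick l = σ.next v l := by rw [hpick]; simp only [dif_pos h1]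
      rw [this]
      exact ⟨hleg.1, hleg.2, notdead_p1 hnd h1 _ hleg.1 hleg.2, fun _ => rfl⟩
    · have h2 : ∃ e, e ∈ A.E ∧ e.1 = A.endFrom v l ∧ ¬ DeadV A e.2.2 :=
        notdead_p2 hfb hnd h1
      have : pick l = h2.choose := by rw [hpick]; simp only [dif_neg h1, dif_pos h2]
      rw [this]
      obtain ⟨ha, hb, hc⟩ := h2.choose_spec
      exact ⟨ha, hb, hc, fun hp => absurd hp h1⟩
  set H : ℕ → List (A.V × C × A.V) := fun n => Nat.rec [] (fun _ l => l ++ [pick l]) n with hH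
  have hHsucc : ∀ n, H (n + 1) = H n ++ [pick (H n)] := fun n => rfl
  set π' : ℕ → A.V × C × A.V := fun n => pick (H n) with hπ'
  have inv : ∀ n, A.HistFrom v (H n) ∧ ¬ DeadV A (A.endFrom v (H n)) := by
    intro n
    induction n with
    | zero => exact ⟨trivial, hv⟩
    | succ n ih =>
      obtain ⟨ha, hb, hc, _⟩ := step (H n) ih.1 ih.2
      rw [hHsucc]
      exact ⟨histFrom_append ih.1 ha hb, by rw [endFrom_append]; exact hc⟩
  have hofn : ∀ n, (List.ofFn fun i : Fin n => π' i) = H n := by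
    intro n
    induction n with
    | zero => rfl
    | succ n ih => rw [ofFn_play_succ, ih, hHsucc]
  have hend : ∀ n, A.endFrom v (H (n + 1)) = (π' n).2.2 := by
    intro n; rw [hHsucc, endFrom_append]
  have hplay : A.PlayFrom v π' := by
    constructor
    · exact (step (H 0) (inv 0).1 (inv 0).2).2.1
    · intro n
      obtain ⟨ha, _, _, _⟩ := step (H n) (inv n).1 (inv n).2
      refine ⟨ha, ?_⟩
      have := (step (H (n+1)) (inv (n+1)).1 (inv (n+1)).2).2.1
      rw [this, hend]
  have hcons : σ.Consistent v π' := by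
    intro n hp
    rw [hofn n] at hp ⊢
    exact (step (H n) (inv n).1 (inv n).2).2.2.2 hp
  exact ⟨Arena.playCol π', hσ π' hplay hcons⟩

end goodedge

/-- generic `ofFn` split for infinite sequences -/
theorem ofFn_seq_succ {α : Type} (f : ℕ → α) (n : ℕ) :
    (List.ofFn fun i : Fin (n+1) => f i) = (List.ofFn fun i : Fin n => f i) ++ [f n] := by
  rw [List.ofFn_succ']
  simp [List.concat_eq_append, Fin.last]

theorem ofFn_seq_add {α : Type} (f : ℕ → α) (n k : ℕ) :
    (List.ofFn fun i : Fin (n+k) => f i) =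
      (List.ofFn fun i : Fin n => f i) ++ (List.ofFn fun j : Fin k => f (n + j)) := by
  rw [List.ofFn_add]
  rfl

theorem updStar_append {C : Type} (N : MemStruct C) (m : N.M) (l₁ l₂ : List C) :
    N.updStar m (l₁ ++ l₂) = N.updStar (N.updStar m l₁) l₂ :=
  List.foldl_append

open Classical in
theorem mpr_safety {C : Type} [Nonempty C] (Aset : Set (List C)) (N : MemStruct C)
    (SM : StronglyMonotone N (SafeObj Aset)) :
    SufficesIn N (SafeObj Aset) (fun A => A.FinBranching) := by
  intro A hfb
  set W : Set (ℕ → C) := SafeObj Aset with hW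
  set nxt : A.V → N.M → A.V × C × A.V := fun v m =>
    if h1 : A.P1 v then
      (if hD : DeadV A v then (exists_deadEdge h1 hD).choose
       else (exists_goodEdge hfb W N SM h1 m).choose)
    else (v, Classical.arbitrary C, v) with hnxt
  have hnxtE : ∀ (v : A.V) (m : N.M), A.P1 v → nxt v m ∈ A.E ∧ (nxt v m).1 = v := by
    intro v m h1
    by_cases hD : DeadV A v
    · have : nxt v m = (exists_deadEdge h1 hD).choose := by
        rw [hnxt]; simp only [dif_pos h1, dif_pos hD]
      rw [this]
      obtain ⟨ha, hb, _⟩ := (exists_deadEdge h1 hD).choose_spec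
      exact ⟨ha, hb⟩
    · have : nxt v m = (exists_goodEdge hfb W N SM h1 m).choose := by
        rw [hnxt]; simp only [dif_pos h1, dif_neg hD]
      rw [this]
      obtain ⟨ha, hb, _⟩ := (exists_goodEdge hfb W N SM h1 m).choose_spec
      exact ⟨ha, hb⟩
  have hnxtDead : ∀ (v : A.V) (m : N.M) (h1 : A.P1 v) (hD : DeadV A v),
      ∃ hD' : DeadV A (nxt v m).2.2, Nat.find hD' < Nat.find hD := by
    intro v m h1 hD
    have : nxt v m = (exists_deadEdge h1 hD).choose := by
      rw [hnxt]; simp only [dif_pos h1, dif_pos hD]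
    rw [this]
    exact (exists_deadEdge h1 hD).choose_spec.2.2
  have hnxtGood : ∀ (v : A.V) (m : N.M) (h1 : A.P1 v), ¬ DeadV A v →
      ∀ w : List C, N.updStar N.init w = m → WinA A W v w →
        WinA A W (nxt v m).2.2 (w ++ [(nxt v m).2.1]) := by
    intro v m h1 hD
    have : nxt v m = (exists_goodEdge hfb W N SM h1 m).choose := by
      rw [hnxt]; simp only [dif_pos h1, dif_neg hD]
    rw [this]
    exact (exists_goodEdge hfb W N SM h1 m).choose_spec.2.2
  refine ⟨⟨fun v l => nxt (A.endFrom v l) (N.updStar N.init (l.map fun e => e.2.1)),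
    fun v l _ hp => hnxtE _ _ hp⟩, ⟨nxt, fun v l _ _ => rfl⟩, ?_⟩
  rintro v₀ ⟨σ', hσ'win⟩ π hπ hcons
  have hwin0 : WinA A W v₀ [] :=
    ⟨σ', fun π h1 h2 => by rw [wcat_nil]; exact hσ'win π h1 h2⟩
  have hconsn : ∀ n, A.P1 ((π n).1) →
      π n = nxt ((π n).1) (N.updStar N.init (List.ofFn fun i : Fin n => Arena.playCol π i)) := by
    intro n hp
    have hend := (play_prefix_hist hπ n).2
    have hp' : A.P1 (A.endFrom v₀ (List.ofFn fun i : Fin n => π i)) := by rw [hend]; exact hp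
    refine (hcons n hp').trans ?_
    show nxt (A.endFrom v₀ (List.ofFn fun i : Fin n => π i))
      (N.updStar N.init ((List.ofFn fun i : Fin n => π i).map fun e => e.2.1)) = _
    rw [hend, List.map_ofFn]
    rfl
  by_cases hdead : ∃ n, DeadV A ((π n).1)
  · exfalso
    obtain ⟨n, hDn⟩ := hdead
    set τ : ℕ → A.V × C × A.V := fun k => π (n + k) with hτ
    have hplayτ : A.PlayFrom ((π n).1) τ := ⟨rfl, fun k => by
      have := hπ.2 (n + k)
      exact ⟨this.1, by rw [show n + k + 1 = n + (k+1) by omega] at this; exact this.2⟩⟩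
    have hconsτ : ∀ k, A.P1 ((τ k).1) →
        τ k = nxt ((τ k).1)
          (N.updStar (N.updStar N.init (List.ofFn fun i : Fin n => Arena.playCol π i))
            (List.ofFn fun i : Fin k => Arena.playCol τ i)) := by
      intro k hp
      have := hconsn (n + k) hp
      rw [ofFn_seq_add (Arena.playCol π) n k, updStar_append] at this
      exact this
    exact dead_no_play nxt hnxtDead (Nat.find hDn) ((π n).1) hDn le_rfl _ τ hplayτ hconsτ
  · push_neg at hdead
    have invariant : ∀ n, WinA A W ((π n).1) (List.ofFn fun i : Fin n => Arena.playCol π i) := by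
      intro n
      induction n with
      | zero =>
        simp only [List.ofFn_zero]
        rw [hπ.1]
        exact hwin0
      | succ n ih =>
        rw [ofFn_seq_succ]
        have hstep : WinA A W ((π n).2.2)
            ((List.ofFn fun i : Fin n => Arena.playCol π i) ++ [(π n).2.1]) := by
          by_cases h1 : A.P1 ((π n).1)
          · have hc := hconsn n h1
            have := hnxtGood ((π n).1) _ h1 (hdead n) _ rfl ih
            rw [← hc] at this
            exact this
          · obtain ⟨σ'', hσ''⟩ := ih
            exact winA_shift σ'' hσ'' (π n) (hπ.2 n).1 rfl (fun hp => absurd hp h1)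
        rw [(hπ.2 n).2] at hstep
        exact hstep
    intro hR
    obtain ⟨n, hpre⟩ := hR
    obtain ⟨x, hx⟩ := alive hfb (hdead n) (invariant n)
    refine hx ⟨n, ?_⟩
    rw [ofFn_wcat (by simp : (List.ofFn fun i : Fin n => Arena.playCol π i).length = n) x]
    exact hpre

section gadget
/-! Gadget arena for the necessity direction. -/

/-- Vertices of the gadget arena. -/
abbrev GV : Type := (Bool × ℕ) ⊕ (Unit ⊕ (Bool × ℕ))

def gpath (b : Bool) (k : ℕ) : GV := Sum.inl (b, k)
def gu : GV := Sum.inr (Sum.inl ())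
def gbr (b : Bool) (k : ℕ) : GV := Sum.inr (Sum.inr (b, k))

variable {C : Type} (w : Bool → List C) (x : Bool → ℕ → C) (d : C)

def pedge (b : Bool) (k : ℕ) : GV × C × GV :=
  (gpath b k, (w b).getD k d, if k + 1 < (w b).length then gpath b (k+1) else gu)

def uedge (b : Bool) : GV × C × GV := (gu, x b 0, gbr b 0)

def bedge (b : Bool) (k : ℕ) : GV × C × GV := (gbr b k, x b (k+1), gbr b (k+1))

def gE : Set (GV × C × GV) :=
  {p | (∃ b k, k < (w b).length ∧ p = pedge w d b k) ∨ (∃ b, p = uedge x b) ∨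
    (∃ b k, p = bedge x b k)}

def gArena : Arena C where
  V := GV
  P1 := fun v => v = gu
  E := gE w x d
  succ := fun v hv => ⟨uedge x true, Or.inr (Or.inl ⟨true, rfl⟩), by rw [hv]; rfl⟩

def gstart (b : Bool) : GV := if 0 < (w b).length then gpath b 0 else gu

def gplay (b j : Bool) : ℕ → GV × C × GV := fun n =>
  if n + 1 ≤ (w b).length then pedge w d b n
  else if n = (w b).length then uedge x j
  else bedge x j (n - (w b).length - 1)

theorem gplay_mem (b j : Bool) (n : ℕ) : gplay w x d b j n ∈ gE w x d := by
  unfold gplay gE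
  by_cases h1 : n + 1 ≤ (w b).length
  · simp only [if_pos h1]
    exact Or.inl ⟨b, n, by omega, rfl⟩
  · simp only [if_neg h1]
    by_cases h2 : n = (w b).length
    · simp only [if_pos h2]
      exact Or.inr (Or.inl ⟨j, rfl⟩)
    · simp only [if_neg h2]
      exact Or.inr (Or.inr ⟨j, _, rfl⟩)

theorem gplay_src (b j : Bool) (n : ℕ) :
    (gplay w x d b j n).1 =
      if n < (w b).length then gpath b n
      else if n = (w b).length then gu else gbr j (n - (w b).length - 1) := by
  unfold gplay
  by_cases h1 : n + 1 ≤ (w b).length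
  · simp only [if_pos h1, if_pos (show n < (w b).length by omega)]; rfl
  · simp only [if_neg h1, if_neg (show ¬ n < (w b).length by omega)]
    by_cases h2 : n = (w b).length
    · simp only [if_pos h2]; rfl
    · simp only [if_neg h2]; rfl

theorem gplay_chain (b j : Bool) (n : ℕ) :
    (gplay w x d b j n).2.2 = (gplay w x d b j (n+1)).1 := by
  rw [gplay_src w x d b j (n+1)]
  unfold gplay
  by_cases h1 : n + 1 ≤ (w b).length
  · simp only [if_pos h1]
    unfold pedge
    by_cases h2 : n + 1 < (w b).length
    · simp only [if_pos h2]
    · simp only [if_neg h2]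
      rw [if_pos (show n + 1 = (w b).length by omega)]
  · simp only [if_neg h1]
    by_cases h2 : n = (w b).length
    · simp only [if_pos h2]
      rw [if_neg (by omega), if_neg (by omega)]
      show gbr j 0 = gbr j (n + 1 - (w b).length - 1)
      have : n + 1 - (w b).length - 1 = 0 := by omega
      rw [this]
    · simp only [if_neg h2]
      rw [if_neg (by omega), if_neg (by omega)]
      show gbr j (n - (w b).length - 1 + 1) = gbr j (n + 1 - (w b).length - 1)
      have : n - (w b).length - 1 + 1 = n + 1 - (w b).length - 1 := by omega
      rw [this]

theorem gplay_play (b j : Bool) :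
    (gArena w x d).PlayFrom (gstart w b) (gplay w x d b j) := by
  constructor
  · rw [gplay_src w x d b j 0]
    unfold gstart
    by_cases h : 0 < (w b).length
    · rw [if_pos h, if_pos h]
    · rw [if_neg h, if_neg h, if_pos (show 0 = (w b).length by omega)]
  · intro n
    exact ⟨gplay_mem w x d b j n, gplay_chain w x d b j n⟩

theorem gplay_src_u_iff (b j : Bool) (n : ℕ) :
    (gplay w x d b j n).1 = gu ↔ n = (w b).length := by
  rw [gplay_src]
  by_cases h1 : n < (w b).length
  · rw [if_pos h1]
    simp [gpath, gu]
    omega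
  · rw [if_neg h1]
    by_cases h2 : n = (w b).length
    · simp [h2]
    · rw [if_neg h2]
      simp [gbr, gu, h2]

theorem gplay_col (b j : Bool) :
    Arena.playCol (gplay w x d b j) = wcat (w b) (x j) := by
  funext n
  show (gplay w x d b j n).2.1 = _
  unfold gplay
  by_cases h1 : n + 1 ≤ (w b).length
  · simp only [if_pos h1]
    rw [wcat_lt (w b) (x j) (show n < (w b).length by omega)]
    unfold pedge
    show (w b).getD n d = (w b).get ⟨n, by omega⟩
    rw [List.getD_eq_getElem _ _ (show n < (w b).length by omega)]
    rfl
  · simp only [if_neg h1]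
    rw [wcat_ge (w b) (x j) (by omega)]
    by_cases h2 : n = (w b).length
    · simp only [if_pos h2]
      unfold uedge
      simp [h2]
    · simp only [if_neg h2]
      unfold bedge
      show x j (n - (w b).length - 1 + 1) = x j (n - (w b).length)
      congr 1
      omega

theorem gE_unique {e : GV × C × GV} (he : e ∈ gE w x d) (b j : Bool) (n : ℕ)
    (hn : n ≠ (w b).length) (hsrc : e.1 = (gplay w x d b j n).1) :
    e = gplay w x d b j n := by
  rw [gplay_src] at hsrc
  unfold gplay
  by_cases h1 : n < (w b).length
  · rw [if_pos h1] at hsrc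
    rw [if_pos (show n + 1 ≤ (w b).length by omega)]
    rcases he with ⟨b', k', hk', rfl⟩ | ⟨b', rfl⟩ | ⟨b', k', rfl⟩
    · have h3 : b' = b ∧ k' = n := by simpa [pedge, gpath] using hsrc
      rw [h3.1, h3.2]
    · exact absurd hsrc (by simp [uedge, gu, gpath])
    · exact absurd hsrc (by simp [bedge, gbr, gpath])
  · rw [if_neg h1, if_neg hn] at hsrc
    rw [if_neg (by omega), if_neg hn]
    rcases he with ⟨b', k', hk', rfl⟩ | ⟨b', rfl⟩ | ⟨b', k', rfl⟩
    · exact absurd hsrc (by simp [pedge, gbr, gpath, gu])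
    · exact absurd hsrc (by simp [uedge, gu, gbr])
    · have h3 : b' = j ∧ k' = n - (w b).length - 1 := by simpa [bedge, gbr] using hsrc
      rw [h3.1, h3.2]

theorem gfinb : (gArena w x d).FinBranching := by
  intro v
  have hsub : {e ∈ (gArena w x d).E | e.1 = v} ⊆
      (Sum.rec (fun p : Bool × ℕ => {pedge w d p.1 p.2})
        (fun q => Sum.rec (fun _ => {uedge x true, uedge x false})
          (fun p : Bool × ℕ => {bedge x p.1 p.2}) q) v : Set (GV × C × GV)) := by
    rintro e ⟨he, hsrc⟩
    rcases he with ⟨b', k', hk', rfl⟩ | ⟨b', rfl⟩ | ⟨b', k', rfl⟩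
    · have : v = gpath b' k' := hsrc.symm
      subst this
      exact rfl
    · have : v = gu := hsrc.symm
      subst this
      cases b'
      · exact Or.inr rfl
      · exact Or.inl rfl
    · have : v = gbr b' k' := hsrc.symm
      subst this
      exact rfl
  refine Set.Finite.subset ?_ hsub
  rcases v with p | q
  · exact Set.finite_singleton _
  · rcases q with _ | p
    · exact (Set.finite_singleton _).insert _
    · exact Set.finite_singleton _

end gadget

section gadget2
variable {C : Type} (w : Bool → List C) (x : Bool → ℕ → C) (d : C)

theorem gplay_prefix (b j : Bool) (n : ℕ) (hn : n ≤ (w b).length) :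
    (List.ofFn fun i : Fin n => gplay w x d b j i) =
      List.ofFn fun i : Fin n => pedge w d b i := by
  have : (fun i : Fin n => gplay w x d b j i) = fun i : Fin n => pedge w d b i := by
    funext i
    unfold gplay
    rw [if_pos (show (i : ℕ) + 1 ≤ (w b).length by have := i.2; omega)]
  rw [this]

theorem ghist_colors (b : Bool) :
    (List.ofFn fun i : Fin (w b).length => pedge w d b i).map (fun e => e.2.1) = w b := by
  rw [List.map_ofFn]
  have : ((fun e : GV × C × GV => e.2.1) ∘ fun i : Fin (w b).length => pedge w d b i)
      = (w b).get := by
    funext i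
    show (w b).getD i d = _
    rw [List.getD_eq_getElem _ _ i.2]
    rfl
  rw [this, List.ofFn_get]

theorem gforced (b j : Bool) (σ : (gArena w x d).Strategy)
    (hσu : σ.next (gstart w b)
      (List.ofFn fun i : Fin (w b).length => gplay w x d b j i) = uedge x j)
    {π : ℕ → GV × C × GV} (hπ : (gArena w x d).PlayFrom (gstart w b) π)
    (hc : σ.Consistent (gstart w b) π) :
    ∀ n, π n = gplay w x d b j n := by
  intro n
  induction n using Nat.strong_induction_on with
  | _ n ih =>
    have hofn : (List.ofFn fun i : Fin n => π i)
        = List.ofFn fun i : Fin n => gplay w x d b j i := by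
      congr 1
      funext i
      exact ih i i.2
    have hsrc : (π n).1 = (gplay w x d b j n).1 := by
      cases n with
      | zero => rw [hπ.1, (gplay_play w x d b j).1]
      | succ k => rw [← (hπ.2 k).2, ih k (by omega), gplay_chain]
    by_cases hn : n = (w b).length
    · have hp : (gArena w x d).P1
          ((gArena w x d).endFrom (gstart w b) (List.ofFn fun i : Fin n => π i)) := by
        rw [(play_prefix_hist hπ n).2]
        show (π n).1 = gu
        rw [hsrc]
        exact (gplay_src_u_iff w x d b j n).2 hn
      have hcn := hc n hp
      rw [hcn]
      erw [hofn]
      subst hn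
      erw [hσu]
      show uedge x j = gplay w x d b j ((w b).length)
      unfold gplay
      rw [if_neg (by omega), if_pos rfl]
    · exact gE_unique w x d ((hπ.2 n).1) b j n hn hsrc

end gadget2

open Classical in
theorem mp_safety {C : Type} [Nonempty C] (W : Set (ℕ → C)) (N : MemStruct C)
    (hsuff : SufficesIn N W (fun A => A.FinBranching)) : StronglyMonotone N W := by
  intro w₁ w₂ hmem
  by_contra hcomp
  have h12 : ¬ prefLe W w₁ w₂ ∧ ¬ prefLe W w₂ w₁ := by
    unfold PrefComparable at hcomp; tauto
  obtain ⟨x₁, hx₁W, hx₁n⟩ := Set.not_subset.1 h12.1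
  obtain ⟨x₂, hx₂W, hx₂n⟩ := Set.not_subset.1 h12.2
  set w : Bool → List C := fun b => cond b w₁ w₂ with hwdef
  set x : Bool → ℕ → C := fun b => cond b x₁ x₂ with hxdef
  set d : C := Classical.arbitrary C with hddef
  obtain ⟨σ, ⟨nxtf, hbased⟩, hopt⟩ := hsuff (gArena w x d) (gfinb w x d)
  -- winning strategies exist from each start
  have hwinb : ∀ b : Bool, ∃ σ' : (gArena w x d).Strategy,
      σ'.WinningFrom W (gstart w b) := by
    intro b
    refine ⟨⟨fun _ _ => uedge x b, fun v l hl hp => ⟨Or.inr (Or.inl ⟨b, rfl⟩), hp.symm⟩⟩, ?_⟩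
    intro π hπ hc
    have hforced := gforced w x d b b _ rfl hπ hc
    have hcolπ : Arena.playCol π = wcat (w b) (x b) := by
      rw [← gplay_col w x d b b]
      funext k
      show (π k).2.1 = _
      rw [hforced k]
      rfl
    rw [hcolπ]
    cases b
    · exact hx₂W
    · exact hx₁W
  -- histories into the choice vertex
  have hist_valid : ∀ b j : Bool, (gArena w x d).HistFrom (gstart w b)
      (List.ofFn fun i : Fin (w b).length => gplay w x d b j i) :=
    fun b j => (play_prefix_hist (gplay_play w x d b j) _).1
  have hist_end : ∀ b j : Bool, (gArena w x d).endFrom (gstart w b)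
      (List.ofFn fun i : Fin (w b).length => gplay w x d b j i) = gu := by
    intro b j
    rw [(play_prefix_hist (gplay_play w x d b j) _).2]
    exact (gplay_src_u_iff w x d b j _).2 rfl
  have hcolhist : ∀ b j : Bool,
      ((List.ofFn fun i : Fin (w b).length => gplay w x d b j i).map fun e => e.2.1)
        = w b := by
    intro b j
    rw [gplay_prefix w x d b j _ le_rfl, ghist_colors]
  have hnext : ∀ b j : Bool, σ.next (gstart w b)
      (List.ofFn fun i : Fin (w b).length => gplay w x d b j i)
        = nxtf gu (N.updStar N.init (w b)) := by
    intro b j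
    rw [hbased _ _ (hist_valid b j) (by rw [hist_end]; rfl), hist_end]
    exact congrArg (fun z => nxtf gu (N.updStar N.init z)) (hcolhist b j)
  have hmem' : N.updStar N.init (w true) = N.updStar N.init (w false) := hmem
  -- the common choice at gu
  have hleg := σ.legal (gstart w true)
    (List.ofFn fun i : Fin (w true).length => gplay w x d true true i)
    (hist_valid true true) (by rw [hist_end]; rfl)
  rw [hist_end true true] at hleg
  obtain ⟨j, hj⟩ : ∃ j : Bool, σ.next (gstart w true)
      (List.ofFn fun i : Fin (w true).length => gplay w x d true true i) = uedge x j := by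
    rcases hleg.1 with ⟨b', k', _, hpe⟩ | ⟨b', hpe⟩ | ⟨b', k', hpe⟩
    · exfalso
      have := hleg.2
      rw [hpe] at this
      exact absurd this (by simp [pedge, gpath, gu])
    · exact ⟨b', hpe⟩
    · exfalso
      have h5 := hleg.2
      rw [hpe] at h5
      simp only [bedge, gbr, gu] at h5
      injection h5 with h6
      injection h6
  have hσu : ∀ b : Bool, σ.next (gstart w b)
      (List.ofFn fun i : Fin (w b).length => gplay w x d b j i) = uedge x j := by
    intro b
    rw [hnext b j]
    cases b
    · rw [← hmem', ← hnext true true, hj]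
    · rw [← hnext true true, hj]
  -- the unique σ-consistent play from each start
  have hconsb : ∀ b : Bool, σ.Consistent (gstart w b) (gplay w x d b j) := by
    intro b n hp
    rw [(play_prefix_hist (gplay_play w x d b j) n).2] at hp
    have hn : n = (w b).length := (gplay_src_u_iff w x d b j n).1 hp
    subst hn
    rw [hσu b]
    show gplay w x d b j ((w b).length) = uedge x j
    unfold gplay
    rw [if_neg (by omega), if_pos rfl]
  have hwins : ∀ b : Bool, wcat (w b) (x j) ∈ W := by
    intro b
    have := hopt (gstart w b) (hwinb b) (gplay w x d b j)
      (gplay_play w x d b j) (hconsb b)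
    erw [gplay_col w x d b j] at this
    exact this
  cases j
  · exact hx₂n (hwins true)
  · exact hx₁n (hwins false)

/-- characterization for general safety objectives in finitely
branching arenas: `N` suffices to play optimally for `W` in all finitely branching
arenas iff `W` is `N`-strongly-monotone. -/
theorem safety_characterization_finBranching {C : Type} [Nonempty C]
    (W : Set (ℕ → C))
    (hsafe : ∃ A : Set (List C), W = SafeObj A)
    (N : MemStruct C) :
    SufficesIn N W (fun A => A.FinBranching) ↔ StronglyMonotone N W := by
  constructor
  · exact fun h => mp_safety W N h
  · intro SM
    obtain ⟨Aset, rfl⟩ := hsafe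
    exact mpr_safety Aset N SM

end RegularMemory
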